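/- Let U be a finite-dimensional real normed vector space with dual U*, V = U×U*, and let S : U×U → ℝ be C¹. Suppose φ : V → V is generated by S, i.e. for all p,q ∈ U and p*,q* ∈ U*: φ(p,p*) = (q,q*) if and only if p* = D₁S(p,q) and q* = −D₂S(p,q). Let h : U → U be a C¹ diffeomorphism (bijective, differentiable, with differentiable inverse, so Dh(u) is invertible for all u), and define Ψ : V → V by Ψ(u,u*) = (h(u), u* ∘ (Dh(u))⁻¹) (the cotangent lift of h). Then Ψ⁻¹ ∘ φ ∘ Ψ = φ if and only if there exists a constant c ∈ ℝ with S(h(u), h(ū)) = S(u,ū) + c for all (u,ū) ∈ U×U. (The paper's Proposition: the cotangent-lifted action of h is an ordinary symmetry of φ if and only if S is invariant under the diagonal action of h, up to a constant.) -/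

import Mathlib

/-- Partial Fréchet derivative of `S : U × U → ℝ` with respect to the first argument. -/
noncomputable def D1 {U : Type} [NormedAddCommGroup U] [NormedSpace ℝ U]
    (S : U × U → ℝ) (p q : U) : U →L[ℝ] ℝ :=
  fderiv ℝ (fun w => S (w, q)) p

/-- Partial Fréchet derivative of `S : U × U → ℝ` with respect to the second argument. -/
noncomputable def D2 {U : Type} [NormedAddCommGroup U] [NormedSpace ℝ U]
    (S : U × U → ℝ) (p q : U) : U →L[ℝ] ℝ :=
  fderiv ℝ (fun w => S (p, w)) q

section Aux

variable {U : Type} [NormedAddCommGroup U] [NormedSpace ℝ U]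

lemma D1_eq (S : U × U → ℝ) (hS : Differentiable ℝ S) (p q : U) :
    D1 S p q = (fderiv ℝ S (p, q)).comp (ContinuousLinearMap.inl ℝ U U) := by
  have h1 : HasFDerivAt (fun w : U => (w, q)) (ContinuousLinearMap.inl ℝ U U) p :=
    HasFDerivAt.prodMk (hasFDerivAt_id p) (hasFDerivAt_const q p)
  exact (((hS (p, q)).hasFDerivAt.comp p h1)).fderiv

lemma D2_eq (S : U × U → ℝ) (hS : Differentiable ℝ S) (p q : U) :
    D2 S p q = (fderiv ℝ S (p, q)).comp (ContinuousLinearMap.inr ℝ U U) := by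
  have h1 : HasFDerivAt (fun w : U => (p, w)) (ContinuousLinearMap.inr ℝ U U) q :=
    HasFDerivAt.prodMk (hasFDerivAt_const p q) (hasFDerivAt_id q)
  exact (((hS (p, q)).hasFDerivAt.comp q h1)).fderiv

lemma fderiv_apply_eq (S : U × U → ℝ) (hS : Differentiable ℝ S) (p q x y : U) :
    fderiv ℝ S (p, q) (x, y) = D1 S p q x + D2 S p q y := by
  rw [D1_eq S hS, D2_eq S hS]
  have hxy : ((x, y) : U × U) = (x, (0 : U)) + ((0 : U), y) := by simp
  rw [hxy, map_add]
  rfl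

lemma chain1 (S : U × U → ℝ) (hS : Differentiable ℝ S) (h : U → U)
    (hh : Differentiable ℝ h) (u q : U) :
    fderiv ℝ (fun w => S (h w, q)) u = (D1 S (h u) q).comp (fderiv ℝ h u) := by
  have hd : Differentiable ℝ (fun w : U => S (w, q)) :=
    hS.comp (differentiable_id.prodMk (differentiable_const q))
  have : (fun w => S (h w, q)) = (fun w : U => S (w, q)) ∘ h := rfl
  rw [this, fderiv_comp u (hd (h u)) (hh u)]
  rfl

lemma chain2 (S : U × U → ℝ) (hS : Differentiable ℝ S) (h : U → U)
    (hh : Differentiable ℝ h) (p q : U) :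
    fderiv ℝ (fun w => S (p, h w)) q = (D2 S p (h q)).comp (fderiv ℝ h q) := by
  have hd : Differentiable ℝ (fun w : U => S (p, w)) :=
    hS.comp ((differentiable_const p).prodMk differentiable_id)
  have : (fun w => S (p, h w)) = (fun w : U => S (p, w)) ∘ h := rfl
  rw [this, fderiv_comp q (hd (h q)) (hh q)]
  rfl

end Aux

/-- the cotangent lift `Ψ(u,u*) = (h(u), u* ∘ (Dh(u))⁻¹)` of a C¹
diffeomorphism `h` is an ordinary symmetry of the symplectic map `φ` generated by `S`
if and only if `S` is invariant (up to a constant) under the diagonal action of `h`.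
Here `(Dh(u))⁻¹ = D(h⁻¹)(h(u))` is expressed via the derivative of the inverse. -/
theorem stmt_10 (U : Type) [NormedAddCommGroup U] [NormedSpace ℝ U] [FiniteDimensional ℝ U]
    (S : U × U → ℝ) (hS : ContDiff ℝ 1 S)
    (φ : U × (U →L[ℝ] ℝ) → U × (U →L[ℝ] ℝ))
    (hgen : ∀ (p q : U) (pstar qstar : U →L[ℝ] ℝ),
      φ (p, pstar) = (q, qstar) ↔ pstar = D1 S p q ∧ qstar = -D2 S p q)
    (h hinv : U → U)
    (hli : Function.LeftInverse hinv h) (hri : Function.RightInverse hinv h)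
    (hC1 : ContDiff ℝ 1 h) (hinvC1 : ContDiff ℝ 1 hinv)
    (Ψ : U × (U →L[ℝ] ℝ) → U × (U →L[ℝ] ℝ))
    (hΨ : ∀ (u : U) (us : U →L[ℝ] ℝ),
      Ψ (u, us) = (h u, us.comp (fderiv ℝ hinv (h u)))) :
    (Function.invFun Ψ ∘ φ ∘ Ψ = φ) ↔
      ∃ c : ℝ, ∀ u ub : U, S (h u, h ub) = S (u, ub) + c := by
  have hSd : Differentiable ℝ S := hS.differentiable one_ne_zero
  have hhd : Differentiable ℝ h := hC1.differentiable one_ne_zero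
  have hinvd : Differentiable ℝ hinv := hinvC1.differentiable one_ne_zero
  -- derivative composition identities
  have hci : ∀ u : U, (fderiv ℝ hinv (h u)).comp (fderiv ℝ h u) = ContinuousLinearMap.id ℝ U := by
    intro u
    have e : fderiv ℝ (hinv ∘ h) u = (fderiv ℝ hinv (h u)).comp (fderiv ℝ h u) :=
      fderiv_comp u (hinvd (h u)) (hhd u)
    rw [← e, show hinv ∘ h = id from funext hli, fderiv_id]
  have hci' : ∀ u : U, (fderiv ℝ h u).comp (fderiv ℝ hinv (h u)) = ContinuousLinearMap.id ℝ U := by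
    intro u
    have e : fderiv ℝ (h ∘ hinv) (h u) =
        (fderiv ℝ h (hinv (h u))).comp (fderiv ℝ hinv (h u)) :=
      fderiv_comp (h u) (hhd (hinv (h u))) (hinvd (h u))
    rw [hli u] at e
    rw [← e, show h ∘ hinv = id from funext hri, fderiv_id]
  -- explicit inverse of Ψ
  set Ψ' : U × (U →L[ℝ] ℝ) → U × (U →L[ℝ] ℝ) :=
    fun x => (hinv x.1, x.2.comp (fderiv ℝ h (hinv x.1))) with hΨ'def
  have hΨ'Ψ : ∀ x, Ψ' (Ψ x) = x := by
    rintro ⟨u, us⟩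
    rw [hΨ u us]
    simp only [hΨ'def, hli u]
    rw [ContinuousLinearMap.comp_assoc, hci u, ContinuousLinearMap.comp_id]
  have hΨΨ' : ∀ x, Ψ (Ψ' x) = x := by
    rintro ⟨v, vs⟩
    simp only [hΨ'def]
    rw [hΨ (hinv v) (vs.comp (fderiv ℝ h (hinv v))), hri v,
      ContinuousLinearMap.comp_assoc]
    have := hci' (hinv v)
    rw [hri v] at this
    rw [this, ContinuousLinearMap.comp_id]
  have hbij : Function.Bijective Ψ :=
    Function.bijective_iff_has_inverse.mpr ⟨Ψ', hΨ'Ψ, hΨΨ'⟩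
  have main_iff : (Function.invFun Ψ ∘ φ ∘ Ψ = φ) ↔ (∀ x, φ (Ψ x) = Ψ (φ x)) := by
    constructor
    · intro hE x
      have h0 : Function.invFun Ψ (φ (Ψ x)) = φ x := congrFun hE x
      calc φ (Ψ x) = Ψ (Function.invFun Ψ (φ (Ψ x))) :=
            (Function.rightInverse_invFun hbij.2 _).symm
        _ = Ψ (φ x) := by rw [h0]
    · intro hc
      funext x
      simp only [Function.comp_apply]
      rw [hc x, Function.leftInverse_invFun hbij.1]
  have hφ1 : ∀ p q : U, φ (p, D1 S p q) = (q, -(D2 S p q)) :=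
    fun p q => (hgen p q _ _).mpr ⟨rfl, rfl⟩
  have hφ2 : ∀ (p : U) (ps : U →L[ℝ] ℝ),
      ps = D1 S p (φ (p, ps)).1 ∧ (φ (p, ps)).2 = -D2 S p (φ (p, ps)).1 :=
    fun p ps => (hgen p (φ (p, ps)).1 ps (φ (p, ps)).2).mp rfl
  rw [main_iff]
  constructor
  · intro hcomm
    have key1 : ∀ u ub : U, (D1 S (h u) (h ub)).comp (fderiv ℝ h u) = D1 S u ub := by
      intro u ub
      have e1 := hcomm (u, D1 S u ub)
      rw [hφ1 u ub, hΨ, hΨ] at e1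
      have e2 := (hgen (h u) (h ub) _ _).mp e1
      rw [← e2.1, ContinuousLinearMap.comp_assoc, hci u, ContinuousLinearMap.comp_id]
    have key2 : ∀ u ub : U, (D2 S (h u) (h ub)).comp (fderiv ℝ h ub) = D2 S u ub := by
      intro u ub
      have e1 := hcomm (u, D1 S u ub)
      rw [hφ1 u ub, hΨ, hΨ] at e1
      have e2 := (hgen (h u) (h ub) _ _).mp e1
      have e3 := e2.2
      rw [ContinuousLinearMap.neg_comp] at e3
      have e4 : (D2 S u ub).comp (fderiv ℝ hinv (h ub)) = D2 S (h u) (h ub) :=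
        neg_injective e3
      rw [← e4, ContinuousLinearMap.comp_assoc, hci ub, ContinuousLinearMap.comp_id]
    -- constancy argument
    set F : U × U → ℝ := fun w => S (h w.1, h w.2) - S w with hFdef
    have hHd : ∀ w : U × U, HasFDerivAt (fun w : U × U => (h w.1, h w.2))
        ((fderiv ℝ h w.1).prodMap (fderiv ℝ h w.2)) w := fun w =>
      HasFDerivAt.prodMap w (hhd w.1).hasFDerivAt (hhd w.2).hasFDerivAt
    have hFat : ∀ w : U × U, HasFDerivAt F
        (((fderiv ℝ S (h w.1, h w.2)).comp
          ((fderiv ℝ h w.1).prodMap (fderiv ℝ h w.2))) - fderiv ℝ S w) w := fun w =>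
      ((hSd (h w.1, h w.2)).hasFDerivAt.comp w (hHd w)).sub (hSd w).hasFDerivAt
    have hFdiff : Differentiable ℝ F := fun w => (hFat w).differentiableAt
    have hfd : ∀ w : U × U, fderiv ℝ F w = 0 := by
      intro w
      rw [(hFat w).fderiv]
      refine ContinuousLinearMap.ext fun z => ?_
      obtain ⟨x, y⟩ := z
      simp only [ContinuousLinearMap.sub_apply, ContinuousLinearMap.comp_apply,
        ContinuousLinearMap.zero_apply]
      rw [show (((fderiv ℝ h w.1).prodMap (fderiv ℝ h w.2)) (x, y))
          = (fderiv ℝ h w.1 x, fderiv ℝ h w.2 y) from rfl]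
      rw [fderiv_apply_eq S hSd, fderiv_apply_eq S hSd]
      have k1 : D1 S (h w.1) (h w.2) (fderiv ℝ h w.1 x) = D1 S w.1 w.2 x := by
        rw [← key1 w.1 w.2]; rfl
      have k2 : D2 S (h w.1) (h w.2) (fderiv ℝ h w.2 y) = D2 S w.1 w.2 y := by
        rw [← key2 w.1 w.2]; rfl
      rw [k1, k2]; ring
    refine ⟨S (h 0, h 0) - S (0, 0), fun u ub => ?_⟩
    have hc := is_const_of_fderiv_eq_zero hFdiff hfd (u, ub) (0, 0)
    simp only [hFdef] at hc
    linarith [hc]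
  · rintro ⟨c, hc⟩ x
    obtain ⟨u, us⟩ := x
    obtain ⟨h1, h2⟩ := hφ2 u us
    set q := (φ (u, us)).1 with hq
    set qs := (φ (u, us)).2 with hqs
    have k1 : D1 S u q = (D1 S (h u) (h q)).comp (fderiv ℝ h u) := by
      have e : (fun w : U => S (w, q)) = fun w => S (h w, h q) - c :=
        funext fun w => by rw [hc w q]; ring
      show fderiv ℝ (fun w : U => S (w, q)) u = _
      rw [e, fderiv_sub_const, chain1 S hSd h hhd u (h q)]
    have k2 : D2 S u q = (D2 S (h u) (h q)).comp (fderiv ℝ h q) := by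
      have e : (fun w : U => S (u, w)) = fun w => S (h u, h w) - c :=
        funext fun w => by rw [hc u w]; ring
      show fderiv ℝ (fun w : U => S (u, w)) q = _
      rw [e, fderiv_sub_const, chain2 S hSd h hhd (h u) q]
    have hφx : φ (u, us) = (q, qs) := rfl
    rw [hΨ u us, hφx, hΨ q qs]
    apply (hgen (h u) (h q) _ _).mpr
    constructor
    · rw [h1, k1, ContinuousLinearMap.comp_assoc, hci' u, ContinuousLinearMap.comp_id]
    · rw [h2, k2, ContinuousLinearMap.neg_comp, ContinuousLinearMap.comp_assoc,
        hci' q, ContinuousLinearMap.comp_id]
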